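/- For all factor indices k₁, k₂ ∈ {1,…,r}, the cross-covariance matrix between the scores s_{k₁} and s_{k₂} equals Cov(s_{k₁}, s_{k₂}) = (1/2)·N_{q_{k₁}}·∑_{i=1}^{l_{k₁}} ∑_{j=1}^{l_{k₂}} ( Z_{(k₁,i)}ᵀ·V⁻¹·Z_{(k₂,j)} ) ⊗ ( Z_{(k₁,i)}ᵀ·V⁻¹·Z_{(k₂,j)} ), where ⊗ denotes the Kronecker product of matrices. -/

import Mathlib

open Matrix MeasureTheory ProbabilityTheory

/-- The commutation matrix `K_{q,q}`: the unique `q² × q²` matrix with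
`K_{q,q} · vec A = vec Aᵀ` for every `q × q` matrix `A` (column-major `vec`). -/
def commMat (q : ℕ) : Matrix (Fin q × Fin q) (Fin q × Fin q) ℝ := fun a b =>
  if a.1 = b.2 ∧ a.2 = b.1 then 1 else 0

/-- The symmetrization matrix `N_q = (1/2)(I_{q²} + K_{q,q})`. -/
noncomputable def Nmat (q : ℕ) : Matrix (Fin q × Fin q) (Fin q × Fin q) ℝ :=
  (1 / 2 : ℝ) • (1 + commMat q)

open Real Filter Asymptotics
open scoped NNReal ENNReal

set_option linter.unusedSectionVars false
set_option linter.unusedTactic false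

section GaussInt
lemma gInt (k : ℕ) : Integrable (fun x : ℝ => x ^ k * Real.exp (-(x ^ 2 / 2))) := by
  have h := integrable_rpow_mul_exp_neg_mul_sq (b := (1/2 : ℝ)) (by norm_num)
    (s := (k : ℝ)) (lt_of_lt_of_le neg_one_lt_zero (Nat.cast_nonneg k))
  have : (fun x : ℝ => x ^ (k : ℝ) * Real.exp (-(1/2) * x ^ 2))
      = fun x : ℝ => x ^ k * Real.exp (-(x ^ 2 / 2)) := by
    funext x
    rw [Real.rpow_natCast]
    ring_nf
  rwa [this] at h

lemma gTop (m : ℕ) : Tendsto (fun x : ℝ => x ^ m * Real.exp (-(x ^ 2 / 2))) atTop (nhds 0) := by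
  have h := rpow_mul_exp_neg_mul_sq_isLittleO_exp_neg (b := (1/2:ℝ)) (by norm_num) (m : ℝ)
  have h2 : Tendsto (fun x : ℝ => Real.exp (-(1/2) * x)) atTop (nhds 0) := by
    have : Tendsto (fun x : ℝ => -(1/2) * x) atTop atBot := by
      apply Tendsto.const_mul_atTop_of_neg (by norm_num) tendsto_id
    exact Real.tendsto_exp_atBot.comp this
  have h3 := h.isBigO.trans_tendsto h2
  refine h3.congr' ?_
  filter_upwards [eventually_gt_atTop (0:ℝ)] with x hx
  rw [Real.rpow_natCast]
  ring_nf

lemma gBot (m : ℕ) : Tendsto (fun x : ℝ => x ^ m * Real.exp (-(x ^ 2 / 2))) atBot (nhds 0) := by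
  have h : Tendsto (fun x : ℝ => ((-1:ℝ)^m) * (x ^ m * Real.exp (-(x ^ 2 / 2)))) atTop (nhds (((-1:ℝ)^m) * 0)) :=
    (gTop m).const_mul _
  rw [mul_zero] at h
  have h2 : Tendsto (fun x : ℝ => (-x) ^ m * Real.exp (-((-x) ^ 2 / 2))) atTop (nhds 0) := by
    refine h.congr fun x => ?_
    rw [neg_pow]
    ring_nf
  have h3 := h2.comp tendsto_neg_atBot_atTop
  refine h3.congr fun x => ?_
  simp

lemma gDeriv (k : ℕ) (x : ℝ) :
    HasDerivAt (fun x : ℝ => -(x ^ (k+1) * Real.exp (-(x ^ 2 / 2))))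
      (x ^ (k+2) * Real.exp (-(x ^ 2 / 2)) - ((k:ℝ)+1) * (x ^ k * Real.exp (-(x ^ 2 / 2)))) x := by
  have hexp : HasDerivAt (fun x : ℝ => Real.exp (-(x ^ 2 / 2)))
      (Real.exp (-(x ^ 2 / 2)) * (-(2 * x ^ 1 / 2))) x :=
    (((hasDerivAt_pow 2 x).div_const 2).neg).exp
  have hpow : HasDerivAt (fun x : ℝ => x ^ (k+1)) (((k:ℝ)+1) * x ^ k) x := by
    have := hasDerivAt_pow (k+1) x
    simpa using this
  have := (hpow.mul hexp).neg
  refine this.congr_deriv ?_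
  push_cast
  ring

lemma gRec (k : ℕ) :
    (∫ x : ℝ, x ^ (k+2) * Real.exp (-(x ^ 2 / 2)))
      = ((k:ℝ)+1) * ∫ x : ℝ, x ^ k * Real.exp (-(x ^ 2 / 2)) := by
  have hint : Integrable (fun x : ℝ => x ^ (k+2) * Real.exp (-(x ^ 2 / 2))
      - ((k:ℝ)+1) * (x ^ k * Real.exp (-(x ^ 2 / 2)))) :=
    (gInt (k+2)).sub ((gInt k).const_mul _)
  have h0 := MeasureTheory.integral_of_hasDerivAt_of_tendsto (f := fun x : ℝ => -(x ^ (k+1) * Real.exp (-(x ^ 2 / 2))))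
    (fun x => gDeriv k x) hint ((gBot (k+1)).neg) ((gTop (k+1)).neg)
  rw [neg_zero, sub_zero] at h0
  rw [MeasureTheory.integral_sub (gInt (k+2)) ((gInt k).const_mul _),
    MeasureTheory.integral_const_mul] at h0
  linarith

lemma g0 : (∫ x : ℝ, Real.exp (-(x ^ 2 / 2))) = Real.sqrt (2 * Real.pi) := by
  have h := integral_gaussian (1/2 : ℝ)
  have h2 : (fun x : ℝ => Real.exp (-(1/2:ℝ) * x ^ 2)) = fun x : ℝ => Real.exp (-(x ^ 2 / 2)) := by
    funext x; ring_nf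
  rw [h2] at h
  rw [h]
  rw [show Real.pi / (1/2) = 2 * Real.pi by ring]

lemma g1 : (∫ x : ℝ, x ^ 1 * Real.exp (-(x ^ 2 / 2))) = 0 := by
  have hd : ∀ x : ℝ, HasDerivAt (fun x : ℝ => -(Real.exp (-(x ^ 2 / 2))))
      (x ^ 1 * Real.exp (-(x ^ 2 / 2))) x := by
    intro x
    have hexp : HasDerivAt (fun x : ℝ => Real.exp (-(x ^ 2 / 2)))
        (Real.exp (-(x ^ 2 / 2)) * (-(2 * x ^ 1 / 2))) x :=
      (((hasDerivAt_pow 2 x).div_const 2).neg).exp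
    have := hexp.neg
    refine this.congr_deriv ?_
    ring
  have hint : Integrable (fun x : ℝ => x ^ 1 * Real.exp (-(x ^ 2 / 2))) := gInt 1
  have hb : Tendsto (fun x : ℝ => -(Real.exp (-(x ^ 2 / 2)))) atBot (nhds (-0)) := by
    refine Tendsto.neg ?_
    have := gBot 0
    refine this.congr fun x => ?_
    simp
  have ht : Tendsto (fun x : ℝ => -(Real.exp (-(x ^ 2 / 2)))) atTop (nhds (-0)) := by
    refine Tendsto.neg ?_
    have := gTop 0
    refine this.congr fun x => ?_
    simp
  rw [neg_zero] at hb ht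
  have h0 := MeasureTheory.integral_of_hasDerivAt_of_tendsto
    (f := fun x : ℝ => -(Real.exp (-(x ^ 2 / 2)))) hd hint hb ht
  simpa using h0

lemma g2 : (∫ x : ℝ, x ^ 2 * Real.exp (-(x ^ 2 / 2))) = Real.sqrt (2 * Real.pi) := by
  have := gRec 0
  simp only [Nat.cast_zero, zero_add, one_mul, pow_zero] at this
  rw [this]
  simpa using g0

lemma g3 : (∫ x : ℝ, x ^ 3 * Real.exp (-(x ^ 2 / 2))) = 0 := by
  have h := gRec 1
  have h1 := g1
  norm_num at h h1 ⊢
  rw [h, h1, mul_zero]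

lemma g4 : (∫ x : ℝ, x ^ 4 * Real.exp (-(x ^ 2 / 2))) = 3 * Real.sqrt (2 * Real.pi) := by
  have := gRec 2
  norm_num at this
  rw [this, g2]
end GaussInt

noncomputable def gmom (k : ℕ) : ℝ := ∫ x : ℝ, x ^ k ∂(gaussianReal 0 1)

section Gmom
lemma gaussianReal_eq : gaussianReal 0 1 =
    volume.withDensity (fun x => ((Real.toNNReal (gaussianPDFReal 0 1 x) : ℝ≥0) : ℝ≥0∞)) := by
  rw [gaussianReal_of_var_ne_zero 0 one_ne_zero]
  rfl

lemma pdf_eq (x : ℝ) : gaussianPDFReal 0 1 x = (Real.sqrt (2 * Real.pi))⁻¹ * Real.exp (-(x ^ 2 / 2)) := by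
  rw [gaussianPDFReal]
  norm_num
  left
  ring

lemma gmom_eq (k : ℕ) : gmom k = (∫ x : ℝ, x ^ k * Real.exp (-(x ^ 2 / 2))) / Real.sqrt (2 * Real.pi) := by
  rw [gmom, gaussianReal_eq,
    integral_withDensity_eq_integral_smul
      ((measurable_gaussianPDFReal 0 1).real_toNNReal) (fun x => x ^ k)]
  have : ∀ x : ℝ, (Real.toNNReal (gaussianPDFReal 0 1 x)) • (x ^ k)
      = (Real.sqrt (2 * Real.pi))⁻¹ * (x ^ k * Real.exp (-(x ^ 2 / 2))) := by
    intro x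
    rw [NNReal.smul_def, smul_eq_mul, Real.coe_toNNReal _ (gaussianPDFReal_nonneg 0 1 x), pdf_eq]
    ring
  rw [integral_congr_ae (Eventually.of_forall this), integral_const_mul]
  rw [div_eq_inv_mul]

lemma sqrt2pi_pos : (0:ℝ) < Real.sqrt (2 * Real.pi) :=
  Real.sqrt_pos.2 (by positivity)

lemma gmom0 : gmom 0 = 1 := by
  rw [gmom_eq]
  simp only [pow_zero, one_mul, g0]
  exact div_self (ne_of_gt sqrt2pi_pos)

lemma gmom1 : gmom 1 = 0 := by rw [gmom_eq, g1, zero_div]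
lemma gmom2 : gmom 2 = 1 := by
  rw [gmom_eq, g2]; exact div_self (ne_of_gt sqrt2pi_pos)
lemma gmom3 : gmom 3 = 0 := by rw [gmom_eq, g3, zero_div]
lemma gmom4 : gmom 4 = 3 := by
  rw [gmom_eq, g4, mul_div_assoc, div_self (ne_of_gt sqrt2pi_pos), mul_one]

lemma integrable_pow_gaussian (k : ℕ) : Integrable (fun x : ℝ => x ^ k) (gaussianReal 0 1) := by
  rw [gaussianReal_eq]
  rw [integrable_withDensity_iff_integrable_smul
      ((measurable_gaussianPDFReal 0 1).real_toNNReal)]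
  have : ∀ x : ℝ, (Real.toNNReal (gaussianPDFReal 0 1 x)) • (x ^ k)
      = (Real.sqrt (2 * Real.pi))⁻¹ * (x ^ k * Real.exp (-(x ^ 2 / 2))) := by
    intro x
    rw [NNReal.smul_def, smul_eq_mul, Real.coe_toNNReal _ (gaussianPDFReal_nonneg 0 1 x), pdf_eq]
    ring
  refine (integrable_congr (Eventually.of_forall this)).2 ?_
  exact (gInt k).const_mul _
end Gmom

section Combo
variable {n : ℕ}

lemma prod_one_pt {f : Fin n → ℝ} (a : Fin n) (h : ∀ i, i ≠ a → f i = 1) :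
    ∏ i : Fin n, f i = f a :=
  Finset.prod_eq_single_of_mem a (Finset.mem_univ a) (fun b _ hb => h b hb)

lemma prod_two_pt {f : Fin n → ℝ} (a c : Fin n) (hac : a ≠ c)
    (h : ∀ i, i ≠ a → i ≠ c → f i = 1) : ∏ i : Fin n, f i = f a * f c := by
  rw [← Finset.mul_prod_erase Finset.univ f (Finset.mem_univ a)]
  have hc : c ∈ Finset.univ.erase a := Finset.mem_erase.2 ⟨hac.symm, Finset.mem_univ c⟩
  rw [← Finset.mul_prod_erase _ f hc]
  have : ∏ i ∈ (Finset.univ.erase a).erase c, f i = 1 := by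
    refine Finset.prod_eq_one fun i hi => ?_
    have h1 := Finset.mem_erase.1 hi
    have h2 := Finset.mem_erase.1 h1.2
    exact h i h2.1 h1.1
  rw [this, mul_one]

lemma prod_multiset_count_univ (S : Multiset (Fin n)) (f : Fin n → ℝ) :
    (S.map f).prod = ∏ i : Fin n, f i ^ (S.count i) := by
  rw [Finset.prod_multiset_map_count]
  refine Finset.prod_subset (Finset.subset_univ _) fun i _ hi => ?_
  rw [Multiset.count_eq_zero_of_notMem (fun hmem => hi (Multiset.mem_toFinset.2 hmem)), pow_zero]

lemma gmom_prod_pair (a b : Fin n) :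
    (∏ i : Fin n, gmom (Multiset.count i ({a, b} : Multiset (Fin n))))
      = if a = b then 1 else 0 := by
  by_cases hab : a = b
  · subst hab
    have h1 : ∀ i, i ≠ a → gmom (Multiset.count i ({a, a} : Multiset (Fin n))) = 1 := by
      intro i hia
      have : Multiset.count i ({a, a} : Multiset (Fin n)) = 0 := by
        simp [Multiset.insert_eq_cons, Multiset.count_cons, Multiset.count_singleton, hia]
      rw [this, gmom0]
    rw [prod_one_pt a h1]
    have : Multiset.count a ({a, a} : Multiset (Fin n)) = 2 := by
      simp [Multiset.insert_eq_cons, Multiset.count_cons, Multiset.count_singleton]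
    rw [this, gmom2, if_pos rfl]
  · rw [if_neg hab]
    refine Finset.prod_eq_zero (Finset.mem_univ a) ?_
    have : Multiset.count a ({a, b} : Multiset (Fin n)) = 1 := by
      simp [Multiset.insert_eq_cons, Multiset.count_cons, Multiset.count_singleton, hab, Ne.symm hab]
    rw [this, gmom1]

lemma gmom_prod_quad (a b c d : Fin n) :
    (∏ i : Fin n, gmom (Multiset.count i ({a, b, c, d} : Multiset (Fin n))))
      = (if a = b then (1:ℝ) else 0) * (if c = d then 1 else 0)
      + (if a = c then 1 else 0) * (if b = d then 1 else 0)
      + (if a = d then 1 else 0) * (if b = c then 1 else 0) := by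
  classical
  by_cases hab : a = b
  · subst hab
    by_cases hcd : c = d
    · subst hcd
      by_cases hac : a = c
      · subst hac
        have h1 : ∀ i, i ≠ a → gmom (Multiset.count i ({a,a,a,a} : Multiset (Fin n))) = 1 := by
          intro i hia
          have : Multiset.count i ({a,a,a,a} : Multiset (Fin n)) = 0 := by
            simp [Multiset.insert_eq_cons, Multiset.count_cons, Multiset.count_singleton, hia]
          rw [this, gmom0]
        rw [prod_one_pt a h1]
        have : Multiset.count a ({a,a,a,a} : Multiset (Fin n)) = 4 := by
          simp [Multiset.insert_eq_cons, Multiset.count_cons, Multiset.count_singleton]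
        rw [this, gmom4]
        norm_num
      · have h1 : ∀ i, i ≠ a → i ≠ c → gmom (Multiset.count i ({a,a,c,c} : Multiset (Fin n))) = 1 := by
          intro i hia hic
          have : Multiset.count i ({a,a,c,c} : Multiset (Fin n)) = 0 := by
            simp [Multiset.insert_eq_cons, Multiset.count_cons, Multiset.count_singleton, hia, hic]
          rw [this, gmom0]
        rw [prod_two_pt a c hac h1]
        have h2 : Multiset.count a ({a,a,c,c} : Multiset (Fin n)) = 2 := by
          simp [Multiset.insert_eq_cons, Multiset.count_cons, Multiset.count_singleton, hac, Ne.symm hac]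
        have h3 : Multiset.count c ({a,a,c,c} : Multiset (Fin n)) = 2 := by
          simp [Multiset.insert_eq_cons, Multiset.count_cons, Multiset.count_singleton,
            Ne.symm hac]
        rw [h2, h3, gmom2]
        simp [hac]
    · by_cases hac : a = c
      · subst hac
        refine Eq.trans (Finset.prod_eq_zero (Finset.mem_univ d) ?_) ?_
        · have : Multiset.count d ({a,a,a,d} : Multiset (Fin n)) = 1 := by
            simp [Multiset.insert_eq_cons, Multiset.count_cons, Multiset.count_singleton,
              Ne.symm hcd, hcd]
          rw [this, gmom1]
        · simp [hcd]
      · by_cases had : a = d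
        · subst had
          refine Eq.trans (Finset.prod_eq_zero (Finset.mem_univ c) ?_) ?_
          · have : Multiset.count c ({a,a,c,a} : Multiset (Fin n)) = 1 := by
              simp [Multiset.insert_eq_cons, Multiset.count_cons, Multiset.count_singleton,
                Ne.symm hac, hac, hcd, Ne.symm hcd]
            rw [this, gmom1]
          · simp [hac, Ne.symm hac, hcd]
        · refine Eq.trans (Finset.prod_eq_zero (Finset.mem_univ c) ?_) ?_
          · have : Multiset.count c ({a,a,c,d} : Multiset (Fin n)) = 1 := by
              simp [Multiset.insert_eq_cons, Multiset.count_cons, Multiset.count_singleton,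
                Ne.symm hac, hac, hcd, Ne.symm hcd]
            rw [this, gmom1]
          · simp [hac, had, hcd]
  · by_cases hac : a = c
    · subst hac
      by_cases hbd : b = d
      · subst hbd
        have h1 : ∀ i, i ≠ a → i ≠ b → gmom (Multiset.count i ({a,b,a,b} : Multiset (Fin n))) = 1 := by
          intro i hia hib
          have : Multiset.count i ({a,b,a,b} : Multiset (Fin n)) = 0 := by
            simp [Multiset.insert_eq_cons, Multiset.count_cons, Multiset.count_singleton, hia, hib]
          rw [this, gmom0]
        rw [prod_two_pt a b hab h1]
        have h2 : Multiset.count a ({a,b,a,b} : Multiset (Fin n)) = 2 := by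
          simp [Multiset.insert_eq_cons, Multiset.count_cons, Multiset.count_singleton, hab, Ne.symm hab]
        have h3 : Multiset.count b ({a,b,a,b} : Multiset (Fin n)) = 2 := by
          simp [Multiset.insert_eq_cons, Multiset.count_cons, Multiset.count_singleton,
            Ne.symm hab]
        rw [h2, h3, gmom2]
        simp [hab]
      · refine Eq.trans (Finset.prod_eq_zero (Finset.mem_univ b) ?_) ?_
        · have : Multiset.count b ({a,b,a,d} : Multiset (Fin n)) = 1 := by
            simp [Multiset.insert_eq_cons, Multiset.count_cons, Multiset.count_singleton,
              Ne.symm hab, hab, hbd, Ne.symm hbd]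
          rw [this, gmom1]
        · simp [hab, hbd, Ne.symm hab]
    · by_cases had : a = d
      · subst had
        by_cases hbc : b = c
        · subst hbc
          have h1 : ∀ i, i ≠ a → i ≠ b → gmom (Multiset.count i ({a,b,b,a} : Multiset (Fin n))) = 1 := by
            intro i hia hib
            have : Multiset.count i ({a,b,b,a} : Multiset (Fin n)) = 0 := by
              simp [Multiset.insert_eq_cons, Multiset.count_cons, Multiset.count_singleton, hia, hib]
            rw [this, gmom0]
          rw [prod_two_pt a b hab h1]
          have h2 : Multiset.count a ({a,b,b,a} : Multiset (Fin n)) = 2 := by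
            simp [Multiset.insert_eq_cons, Multiset.count_cons, Multiset.count_singleton, hab, Ne.symm hab]
          have h3 : Multiset.count b ({a,b,b,a} : Multiset (Fin n)) = 2 := by
            simp [Multiset.insert_eq_cons, Multiset.count_cons, Multiset.count_singleton,
              Ne.symm hab]
          rw [h2, h3, gmom2]
          simp [hab, hac]
        · refine Eq.trans (Finset.prod_eq_zero (Finset.mem_univ b) ?_) ?_
          · have : Multiset.count b ({a,b,c,a} : Multiset (Fin n)) = 1 := by
              simp [Multiset.insert_eq_cons, Multiset.count_cons, Multiset.count_singleton,
                Ne.symm hab, hab, hbc, Ne.symm hbc]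
            rw [this, gmom1]
          · simp [hab, hbc, Ne.symm hab]
      · refine Eq.trans (Finset.prod_eq_zero (Finset.mem_univ a) ?_) ?_
        · have : Multiset.count a ({a,b,c,d} : Multiset (Fin n)) = 1 := by
            simp [Multiset.insert_eq_cons, Multiset.count_cons, Multiset.count_singleton,
              hab, hac, had]
          rw [this, gmom1]
        · simp [hab, hac, had]
end Combo

section ProbA
variable {Ω : Type*} [MeasurableSpace Ω] {μ : Measure Ω} [IsProbabilityMeasure μ]
  {n : ℕ} {u : Ω → Fin n → ℝ}

lemma umom (humeas : ∀ i, Measurable fun ω => u ω i)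
    (hulaw : ∀ i, Measure.map (fun ω => u ω i) μ = gaussianReal 0 1)
    (i : Fin n) (k : ℕ) : ∫ ω, u ω i ^ k ∂μ = gmom k := by
  rw [gmom, ← hulaw i]
  exact (integral_map ((humeas i).aemeasurable)
    (measurable_id.pow_const k).aestronglyMeasurable).symm

lemma uint (humeas : ∀ i, Measurable fun ω => u ω i)
    (hulaw : ∀ i, Measure.map (fun ω => u ω i) μ = gaussianReal 0 1)
    (i : Fin n) (k : ℕ) : Integrable (fun ω => u ω i ^ k) μ := by
  have h := integrable_pow_gaussian k
  rw [← hulaw i] at h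
  exact (integrable_map_measure
    (measurable_id.pow_const k).aestronglyMeasurable
    (humeas i).aemeasurable).1 h

lemma uprod (humeas : ∀ i, Measurable fun ω => u ω i)
    (huindep : iIndepFun (fun i ω => u ω i) μ)
    (hulaw : ∀ i, Measure.map (fun ω => u ω i) μ = gaussianReal 0 1)
    (m : Fin n → ℕ) (s : Finset (Fin n)) :
    Integrable (fun ω => ∏ i ∈ s, u ω i ^ m i) μ ∧
      (∫ ω, ∏ i ∈ s, u ω i ^ m i ∂μ) = ∏ i ∈ s, gmom (m i) := by
  classical
  have hcomp : iIndepFun (fun i ω => u ω i ^ m i) μ :=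
    huindep.comp (fun i x => x ^ m i) (fun i => measurable_id.pow_const (m i))
  have hmeas : ∀ i, Measurable (fun ω => u ω i ^ m i) :=
    fun i => (humeas i).pow_const (m i)
  induction s using Finset.induction_on with
  | empty => simp
  | @insert a s ha ih =>
    have hI : IndepFun (fun ω => u ω a ^ m a) (fun ω => ∏ i ∈ s, u ω i ^ m i) μ := by
      have := hcomp.indepFun_finset_prod_of_notMem hmeas ha
      have heq : (∏ j ∈ s, fun ω => u ω j ^ m j) = fun ω => ∏ i ∈ s, u ω i ^ m i := by
        funext ω
        simp [Finset.prod_apply]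
      rw [heq] at this
      exact this.symm
    have hia := uint humeas hulaw a (m a)
    constructor
    · have h2 := hI.integrable_mul hia ih.1
      refine h2.congr (Eventually.of_forall fun ω => ?_)
      simp only [Pi.mul_apply]
      exact (Finset.prod_insert (f := fun i => u ω i ^ m i) ha).symm
    · have hstep : (fun ω => ∏ i ∈ insert a s, u ω i ^ m i)
          = fun ω => (u ω a ^ m a) * ∏ i ∈ s, u ω i ^ m i :=
        funext fun ω => Finset.prod_insert ha
      have hmul := hI.integral_mul_eq_mul_integral hia.aestronglyMeasurable ih.1.aestronglyMeasurable
      have heqi : (∫ ω, ((fun ω => u ω a ^ m a) * fun ω => ∏ i ∈ s, u ω i ^ m i) ω ∂μ)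
          = ∫ ω, u ω a ^ m a * ∏ i ∈ s, u ω i ^ m i ∂μ := by
        refine integral_congr_ae (Eventually.of_forall fun ω => ?_)
        simp [Pi.mul_apply]
      rw [hstep]
      rw [show (∫ ω, u ω a ^ m a * ∏ i ∈ s, u ω i ^ m i ∂μ)
        = ∫ ω, ((fun ω => u ω a ^ m a) * fun ω => ∏ i ∈ s, u ω i ^ m i) ω ∂μ from heqi.symm]
      rw [hmul, Finset.prod_insert ha, umom humeas hulaw a (m a), ih.2]
end ProbA

section ProbB
variable {Ω : Type*} [MeasurableSpace Ω] {μ : Measure Ω} [IsProbabilityMeasure μ]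
  {n : ℕ} {u : Ω → Fin n → ℝ}

section UU
variable (humeas : ∀ i, Measurable fun ω => u ω i)
  (huindep : iIndepFun (fun i ω => u ω i) μ)
  (hulaw : ∀ i, Measure.map (fun ω => u ω i) μ = gaussianReal 0 1)

lemma upair_key (a b : Fin n) (ω : Ω) :
    u ω a * u ω b = ∏ i : Fin n, u ω i ^ (Multiset.count i ({a, b} : Multiset (Fin n))) := by
  rw [← prod_multiset_count_univ]
  simp [Multiset.insert_eq_cons]

lemma uquad_key (a b c d : Fin n) (ω : Ω) :
    u ω a * u ω b * u ω c * u ω d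
      = ∏ i : Fin n, u ω i ^ (Multiset.count i ({a, b, c, d} : Multiset (Fin n))) := by
  rw [← prod_multiset_count_univ]
  simp [Multiset.insert_eq_cons]
  ring

include humeas huindep hulaw

lemma upair_int (a b : Fin n) : Integrable (fun ω => u ω a * u ω b) μ := by
  have h := (uprod humeas huindep hulaw
    (fun i => Multiset.count i ({a, b} : Multiset (Fin n))) Finset.univ).1
  exact h.congr (Eventually.of_forall fun ω => (upair_key a b ω).symm)

lemma upair_val (a b : Fin n) :
    (∫ ω, u ω a * u ω b ∂μ) = if a = b then 1 else 0 := by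
  have h := (uprod humeas huindep hulaw
    (fun i => Multiset.count i ({a, b} : Multiset (Fin n))) Finset.univ).2
  rw [integral_congr_ae (Eventually.of_forall fun ω => upair_key (u := u) a b ω), h,
    gmom_prod_pair]

lemma uquad_int (a b c d : Fin n) :
    Integrable (fun ω => u ω a * u ω b * u ω c * u ω d) μ := by
  have h := (uprod humeas huindep hulaw
    (fun i => Multiset.count i ({a, b, c, d} : Multiset (Fin n))) Finset.univ).1
  exact h.congr (Eventually.of_forall fun ω => (uquad_key a b c d ω).symm)

lemma uquad_val (a b c d : Fin n) :
    (∫ ω, u ω a * u ω b * u ω c * u ω d ∂μ)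
      = (if a = b then (1:ℝ) else 0) * (if c = d then 1 else 0)
      + (if a = c then 1 else 0) * (if b = d then 1 else 0)
      + (if a = d then 1 else 0) * (if b = c then 1 else 0) := by
  have h := (uprod humeas huindep hulaw
    (fun i => Multiset.count i ({a, b, c, d} : Multiset (Fin n))) Finset.univ).2
  rw [integral_congr_ae (Eventually.of_forall fun ω => uquad_key (u := u) a b c d ω), h,
    gmom_prod_quad]

end UU

section Core
variable (humeas : ∀ i, Measurable fun ω => u ω i)
  (huindep : iIndepFun (fun i ω => u ω i) μ)
  (hulaw : ∀ i, Measure.map (fun ω => u ω i) μ = gaussianReal 0 1)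

include humeas huindep hulaw

lemma core_int (C : Fin n × Fin n → ℝ) :
    Integrable (fun ω => ∑ p : Fin n × Fin n, C p * (u ω p.1 * u ω p.2)) μ :=
  integrable_finset_sum _ fun p _ =>
    ((upair_int humeas huindep hulaw p.1 p.2).const_mul (C p))

lemma core_mean (C : Fin n × Fin n → ℝ) :
    (∫ ω, ∑ p : Fin n × Fin n, C p * (u ω p.1 * u ω p.2) ∂μ)
      = ∑ m : Fin n, C (m, m) := by
  rw [integral_finset_sum _ fun p _ =>
    ((upair_int humeas huindep hulaw p.1 p.2).const_mul (C p))]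
  have : ∀ p : Fin n × Fin n, (∫ ω, C p * (u ω p.1 * u ω p.2) ∂μ)
      = C p * (if p.1 = p.2 then 1 else 0) := by
    intro p
    rw [integral_const_mul, upair_val humeas huindep hulaw]
  rw [Finset.sum_congr rfl fun p _ => this p, Fintype.sum_prod_type]
  simp [mul_ite, Finset.sum_ite_eq]

lemma core_int_mul (C D : Fin n × Fin n → ℝ) :
    Integrable (fun ω => (∑ p : Fin n × Fin n, C p * (u ω p.1 * u ω p.2))
      * (∑ r : Fin n × Fin n, D r * (u ω r.1 * u ω r.2))) μ := by
  have hkey : ∀ ω, (∑ p : Fin n × Fin n, C p * (u ω p.1 * u ω p.2))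
      * (∑ r : Fin n × Fin n, D r * (u ω r.1 * u ω r.2))
      = ∑ p : Fin n × Fin n, ∑ r : Fin n × Fin n,
          (C p * D r) * (u ω p.1 * u ω p.2 * u ω r.1 * u ω r.2) := by
    intro ω
    rw [Finset.sum_mul_sum]
    refine Finset.sum_congr rfl fun p _ => Finset.sum_congr rfl fun r _ => by ring
  refine Integrable.congr ?_ (Eventually.of_forall fun ω => (hkey ω).symm)
  exact integrable_finset_sum _ fun p _ => integrable_finset_sum _ fun r _ =>
    ((uquad_int humeas huindep hulaw p.1 p.2 r.1 r.2).const_mul (C p * D r))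

lemma core_cov (C D : Fin n × Fin n → ℝ) :
    (∫ ω, (∑ p : Fin n × Fin n, C p * (u ω p.1 * u ω p.2))
        * (∑ r : Fin n × Fin n, D r * (u ω r.1 * u ω r.2)) ∂μ)
      - (∫ ω, ∑ p : Fin n × Fin n, C p * (u ω p.1 * u ω p.2) ∂μ)
        * (∫ ω, ∑ r : Fin n × Fin n, D r * (u ω r.1 * u ω r.2) ∂μ)
      = ∑ p : Fin n × Fin n, C p * (D p + D (p.2, p.1)) := by
  have hkey : ∀ ω, (∑ p : Fin n × Fin n, C p * (u ω p.1 * u ω p.2))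
      * (∑ r : Fin n × Fin n, D r * (u ω r.1 * u ω r.2))
      = ∑ p : Fin n × Fin n, ∑ r : Fin n × Fin n,
          (C p * D r) * (u ω p.1 * u ω p.2 * u ω r.1 * u ω r.2) := by
    intro ω
    rw [Finset.sum_mul_sum]
    refine Finset.sum_congr rfl fun p _ => Finset.sum_congr rfl fun r _ => by ring
  have hXY : (∫ ω, (∑ p : Fin n × Fin n, C p * (u ω p.1 * u ω p.2))
        * (∑ r : Fin n × Fin n, D r * (u ω r.1 * u ω r.2)) ∂μ)
      = ∑ p : Fin n × Fin n, ∑ r : Fin n × Fin n, (C p * D r) *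
          ((if p.1 = p.2 then (1:ℝ) else 0) * (if r.1 = r.2 then 1 else 0)
          + (if p.1 = r.1 then 1 else 0) * (if p.2 = r.2 then 1 else 0)
          + (if p.1 = r.2 then 1 else 0) * (if p.2 = r.1 then 1 else 0)) := by
    rw [integral_congr_ae (Eventually.of_forall hkey)]
    rw [integral_finset_sum _ fun p _ => integrable_finset_sum _ fun r _ =>
      ((uquad_int humeas huindep hulaw p.1 p.2 r.1 r.2).const_mul (C p * D r))]
    refine Finset.sum_congr rfl fun p _ => ?_
    rw [integral_finset_sum _ fun r _ =>
      ((uquad_int humeas huindep hulaw p.1 p.2 r.1 r.2).const_mul (C p * D r))]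
    refine Finset.sum_congr rfl fun r _ => ?_
    rw [integral_const_mul, uquad_val humeas huindep hulaw]
  rw [hXY, core_mean humeas huindep hulaw C, core_mean humeas huindep hulaw D]
  have hsplit : ∀ (p r : Fin n × Fin n), (C p * D r) *
          ((if p.1 = p.2 then (1:ℝ) else 0) * (if r.1 = r.2 then 1 else 0)
          + (if p.1 = r.1 then 1 else 0) * (if p.2 = r.2 then 1 else 0)
          + (if p.1 = r.2 then 1 else 0) * (if p.2 = r.1 then 1 else 0))
      = (C p * (if p.1 = p.2 then (1:ℝ) else 0)) * (D r * (if r.1 = r.2 then 1 else 0))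
      + (C p * D r) * ((if p.1 = r.1 then 1 else 0) * (if p.2 = r.2 then 1 else 0))
      + (C p * D r) * ((if p.1 = r.2 then 1 else 0) * (if p.2 = r.1 then 1 else 0)) := by
    intro p r
    ring
  simp only [hsplit, Finset.sum_add_distrib]
  have hT1 : (∑ p : Fin n × Fin n, ∑ r : Fin n × Fin n,
      (C p * (if p.1 = p.2 then (1:ℝ) else 0)) * (D r * (if r.1 = r.2 then 1 else 0)))
      = (∑ m : Fin n, C (m, m)) * (∑ m : Fin n, D (m, m)) := by
    rw [← Finset.sum_mul_sum]
    congr 1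
    · rw [Fintype.sum_prod_type]
      simp [mul_ite, Finset.sum_ite_eq]
    · rw [Fintype.sum_prod_type]
      simp [mul_ite, Finset.sum_ite_eq]
  have hT2 : ∀ p : Fin n × Fin n, (∑ r : Fin n × Fin n,
      (C p * D r) * ((if p.1 = r.1 then (1:ℝ) else 0) * (if p.2 = r.2 then 1 else 0)))
      = C p * D p := by
    intro p
    rw [Fintype.sum_prod_type]
    simp [mul_ite, Finset.sum_ite_eq, Finset.sum_ite_eq']
  have hT3 : ∀ p : Fin n × Fin n, (∑ r : Fin n × Fin n,
      (C p * D r) * ((if p.1 = r.2 then (1:ℝ) else 0) * (if p.2 = r.1 then 1 else 0)))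
      = C p * D (p.2, p.1) := by
    intro p
    rw [Fintype.sum_prod_type]
    simp [mul_ite, Finset.sum_ite_eq, Finset.sum_ite_eq', Finset.mul_sum]
  rw [hT1, Finset.sum_congr rfl fun p _ => hT2 p, Finset.sum_congr rfl fun p _ => hT3 p]
  rw [Finset.sum_congr rfl (fun p _ => (mul_add (C p) (D p) (D (p.2, p.1))))]
  rw [Finset.sum_add_distrib]
  ring

end Core
end ProbB

lemma sum_pair_factor {n : ℕ} (f g f' g' : Fin n → ℝ) :
    (∑ p : Fin n × Fin n, (f p.1 * g p.2) * (f' p.1 * g' p.2))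
      = (∑ m, f m * f' m) * (∑ t, g t * g' t) := by
  rw [Finset.sum_mul_sum, Fintype.sum_prod_type]
  exact Finset.sum_congr rfl fun m _ => Finset.sum_congr rfl fun t _ => by ring

lemma quad_entry {qq n : ℕ} (G : Matrix (Fin qq) (Fin n) ℝ) (H : Matrix (Fin n) (Fin qq) ℝ)
    (w : Fin n → ℝ) (y x : Fin qq) :
    (G * vecMulVec w w * H) y x = (∑ m, G y m * w m) * (∑ t, w t * H t x) := by
  have h1 : (G * vecMulVec w w * H) y x = ∑ t, (∑ m, G y m * (w m * w t)) * H t x := by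
    simp [Matrix.mul_apply, Matrix.vecMulVec_apply]
  rw [h1, Finset.sum_mul_sum]
  rw [Finset.sum_congr rfl fun t (_ : t ∈ Finset.univ) => Finset.sum_mul Finset.univ (fun m => G y m * (w m * w t)) (H t x)]
  rw [Finset.sum_comm]
  exact Finset.sum_congr rfl fun m _ => Finset.sum_congr rfl fun t _ => by ring

/-- In the multi-factor LMM, with `e = σ R u` for `u` a vector of i.i.d.
standard normals, the cross-covariance matrix between the scores `s_{k₁}` and `s_{k₂}` equals
`(1/2) N_{q_{k₁}} ∑_i ∑_j (Z_{(k₁,i)}ᵀ V⁻¹ Z_{(k₂,j)}) ⊗ (Z_{(k₁,i)}ᵀ V⁻¹ Z_{(k₂,j)})`. -/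
theorem stmt6 {Ω : Type*} [MeasurableSpace Ω] (μ : Measure Ω) [IsProbabilityMeasure μ]
    (n p r : ℕ) (hn : 0 < n) (hp : 0 < p) (σ : ℝ) (hσ : 0 < σ)
    (V R : Matrix (Fin n) (Fin n) ℝ) (hVpd : V.PosDef) (hR : R * Rᵀ = V)
    (l q : Fin r → ℕ)
    (Z : (k : Fin r) → Fin (l k) → Matrix (Fin n) (Fin (q k)) ℝ)
    (u : Ω → Fin n → ℝ)
    (humeas : ∀ i, Measurable fun ω => u ω i)
    (huindep : iIndepFun (fun i ω => u ω i) μ)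
    (hulaw : ∀ i, Measure.map (fun ω => u ω i) μ = gaussianReal 0 1)
    (e : Ω → Fin n → ℝ) (he : ∀ ω, e ω = σ • (R *ᵥ u ω))
    (s : (k : Fin r) → Ω → (Fin (q k) × Fin (q k)) → ℝ)
    (hs : ∀ k ω idx, s k ω idx =
      ((1 / 2 : ℝ) •
        ∑ j, (Z k j)ᵀ * V⁻¹ * ((σ ^ 2)⁻¹ • vecMulVec (e ω) (e ω) - V) * V⁻¹ * Z k j)
        idx.2 idx.1) :
    ∀ (k₁ k₂ : Fin r) (a : Fin (q k₁) × Fin (q k₁)) (b : Fin (q k₂) × Fin (q k₂)),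
      (∫ ω, s k₁ ω a * s k₂ ω b ∂μ) - (∫ ω, s k₁ ω a ∂μ) * (∫ ω, s k₂ ω b ∂μ) =
        ((1 / 2 : ℝ) • (Nmat (q k₁) *
          ∑ i, ∑ j, kroneckerMap (· * ·) ((Z k₁ i)ᵀ * V⁻¹ * Z k₂ j)
            ((Z k₁ i)ᵀ * V⁻¹ * Z k₂ j))) a b := by
  intro k₁ k₂ a b
  have hVdet : IsUnit V.det := Matrix.isUnit_iff_isUnit_det V |>.1 hVpd.isUnit
  have hVT : Vᵀ = V := by
    rw [← Matrix.conjTranspose_eq_transpose_of_trivial]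
    exact hVpd.isHermitian
  have hVinvT : V⁻¹ᵀ = V⁻¹ := by rw [Matrix.transpose_nonsing_inv, hVT]
  have hAt : ∀ (k : Fin r) (i : Fin (l k)), ((Z k i)ᵀ * V⁻¹ * R)ᵀ = Rᵀ * V⁻¹ * Z k i := by
    intro k i
    rw [Matrix.transpose_mul, Matrix.transpose_mul, Matrix.transpose_transpose, hVinvT,
      ← Matrix.mul_assoc]
  have hAB : ∀ (i : Fin (l k₁)) (j : Fin (l k₂)),
      ((Z k₁ i)ᵀ * V⁻¹ * R) * (((Z k₂ j)ᵀ * V⁻¹ * R))ᵀ = (Z k₁ i)ᵀ * V⁻¹ * Z k₂ j := by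
    intro i j
    rw [hAt]
    have h1 : (Z k₁ i)ᵀ * V⁻¹ * R * (Rᵀ * V⁻¹ * Z k₂ j)
        = (Z k₁ i)ᵀ * (V⁻¹ * ((R * Rᵀ) * (V⁻¹ * Z k₂ j))) := by
      simp only [Matrix.mul_assoc]
    rw [h1, hR, ← Matrix.mul_assoc V V⁻¹ (Z k₂ j), Matrix.mul_nonsing_inv V hVdet,
      Matrix.one_mul, ← Matrix.mul_assoc]
  -- step: pointwise representation of s
  have hW : ∀ ω, (σ ^ 2)⁻¹ • vecMulVec (e ω) (e ω) = vecMulVec (R *ᵥ u ω) (R *ᵥ u ω) := by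
    intro ω
    ext i j
    rw [Matrix.smul_apply, Matrix.vecMulVec_apply, Matrix.vecMulVec_apply, he ω]
    simp only [Pi.smul_apply, smul_eq_mul]
    have hσ2 : (σ ^ 2)⁻¹ * σ ^ 2 = 1 := inv_mul_cancel₀ (pow_ne_zero 2 (ne_of_gt hσ))
    calc (σ ^ 2)⁻¹ * (σ * (R *ᵥ u ω) i * (σ * (R *ᵥ u ω) j))
        = ((σ ^ 2)⁻¹ * σ ^ 2) * ((R *ᵥ u ω) i * (R *ᵥ u ω) j) := by ring
      _ = (R *ᵥ u ω) i * (R *ᵥ u ω) j := by rw [hσ2, one_mul]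
  have hentry : ∀ (k : Fin r) (i : Fin (l k)) (x y : Fin (q k)) ω,
      ((Z k i)ᵀ * V⁻¹ * ((σ ^ 2)⁻¹ • vecMulVec (e ω) (e ω) - V) * V⁻¹ * Z k i) y x
      = (∑ m, ((Z k i)ᵀ * V⁻¹ * R) y m * u ω m) * (∑ t, ((Z k i)ᵀ * V⁻¹ * R) x t * u ω t)
        - ((Z k i)ᵀ * V⁻¹ * Z k i) y x := by
    intro k i x y ω
    rw [hW ω, Matrix.mul_sub, Matrix.sub_mul, Matrix.sub_mul, Matrix.sub_apply]
    congr 1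
    · have hassoc : (Z k i)ᵀ * V⁻¹ * vecMulVec (R *ᵥ u ω) (R *ᵥ u ω) * V⁻¹ * Z k i
          = ((Z k i)ᵀ * V⁻¹) * vecMulVec (R *ᵥ u ω) (R *ᵥ u ω) * (V⁻¹ * Z k i) := by
        simp only [Matrix.mul_assoc]
      rw [hassoc, quad_entry]
      congr 1
      · have h1 : (∑ m, ((Z k i)ᵀ * V⁻¹) y m * (R *ᵥ u ω) m)
            = (((Z k i)ᵀ * V⁻¹) *ᵥ (R *ᵥ u ω)) y := by
          simp [Matrix.mulVec, dotProduct]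
        rw [h1, Matrix.mulVec_mulVec]
        simp [Matrix.mulVec, dotProduct]
      · have h1 : (∑ t, (R *ᵥ u ω) t * (V⁻¹ * Z k i) t x)
            = ((R *ᵥ u ω) ᵥ* (V⁻¹ * Z k i)) x := by
          simp [Matrix.vecMul, dotProduct]
        rw [h1, ← Matrix.vecMul_transpose, Matrix.vecMul_vecMul, ← Matrix.mul_assoc,
          ← hAt k i, Matrix.vecMul_transpose]
        simp [Matrix.mulVec, dotProduct]
    · have h2 : (Z k i)ᵀ * V⁻¹ * V * V⁻¹ * Z k i = (Z k i)ᵀ * V⁻¹ * Z k i := by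
        rw [Matrix.mul_assoc ((Z k i)ᵀ) V⁻¹ V, Matrix.nonsing_inv_mul V hVdet, Matrix.mul_one]
      rw [h2]
  have hrep : ∀ (k : Fin r) (x y : Fin (q k)) ω, s k ω (x, y)
      = (1/2 : ℝ) * ((∑ p : Fin n × Fin n,
          (∑ i, ((Z k i)ᵀ * V⁻¹ * R) y p.1 * ((Z k i)ᵀ * V⁻¹ * R) x p.2)
            * (u ω p.1 * u ω p.2))
        - ∑ i, ((Z k i)ᵀ * V⁻¹ * Z k i) y x) := by
    intro k x y ω
    rw [hs k ω (x, y), Matrix.smul_apply, Matrix.sum_apply, smul_eq_mul]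
    congr 1
    rw [Finset.sum_congr rfl fun i _ => hentry k i x y ω, Finset.sum_sub_distrib]
    congr 1
    calc ∑ i, (∑ m, ((Z k i)ᵀ * V⁻¹ * R) y m * u ω m) * (∑ t, ((Z k i)ᵀ * V⁻¹ * R) x t * u ω t)
        = ∑ i, ∑ p : Fin n × Fin n,
            (((Z k i)ᵀ * V⁻¹ * R) y p.1 * ((Z k i)ᵀ * V⁻¹ * R) x p.2) * (u ω p.1 * u ω p.2) := by
          refine Finset.sum_congr rfl fun i _ => ?_
          rw [Finset.sum_mul_sum, Fintype.sum_prod_type]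
          exact Finset.sum_congr rfl fun m _ => Finset.sum_congr rfl fun t _ => by ring
      _ = ∑ p : Fin n × Fin n, ∑ i,
            (((Z k i)ᵀ * V⁻¹ * R) y p.1 * ((Z k i)ᵀ * V⁻¹ * R) x p.2) * (u ω p.1 * u ω p.2) :=
          Finset.sum_comm
      _ = ∑ p : Fin n × Fin n,
            (∑ i, ((Z k i)ᵀ * V⁻¹ * R) y p.1 * ((Z k i)ᵀ * V⁻¹ * R) x p.2) * (u ω p.1 * u ω p.2) := by
          refine Finset.sum_congr rfl fun p _ => ?_
          rw [Finset.sum_mul]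
  -- abbreviations
  set C : Fin n × Fin n → ℝ :=
    fun p => ∑ i, ((Z k₁ i)ᵀ * V⁻¹ * R) a.2 p.1 * ((Z k₁ i)ᵀ * V⁻¹ * R) a.1 p.2 with hCdef
  set D : Fin n × Fin n → ℝ :=
    fun p => ∑ j, ((Z k₂ j)ᵀ * V⁻¹ * R) b.2 p.1 * ((Z k₂ j)ᵀ * V⁻¹ * R) b.1 p.2 with hDdef
  set T1 : ℝ := ∑ i, ((Z k₁ i)ᵀ * V⁻¹ * Z k₁ i) a.2 a.1 with hT1def
  set T2 : ℝ := ∑ j, ((Z k₂ j)ᵀ * V⁻¹ * Z k₂ j) b.2 b.1 with hT2def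
  have hsa : ∀ ω, s k₁ ω a
      = (1/2 : ℝ) * ((∑ p : Fin n × Fin n, C p * (u ω p.1 * u ω p.2)) - T1) := by
    intro ω
    have h := hrep k₁ a.1 a.2 ω
    rw [Prod.mk.eta] at h
    exact h
  have hsb : ∀ ω, s k₂ ω b
      = (1/2 : ℝ) * ((∑ p : Fin n × Fin n, D p * (u ω p.1 * u ω p.2)) - T2) := by
    intro ω
    have h := hrep k₂ b.1 b.2 ω
    rw [Prod.mk.eta] at h
    exact h
  have hintX := core_int humeas huindep hulaw C
  have hintY := core_int humeas huindep hulaw D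
  have hintXY := core_int_mul humeas huindep hulaw C D
  have hcov := core_cov humeas huindep hulaw C D
  have hIs1 : (∫ ω, s k₁ ω a ∂μ)
      = (1/2 : ℝ) * ((∫ ω, ∑ p : Fin n × Fin n, C p * (u ω p.1 * u ω p.2) ∂μ) - T1) := by
    rw [integral_congr_ae (Filter.Eventually.of_forall hsa), integral_const_mul,
      integral_sub hintX (integrable_const T1), integral_const]
    simp
  have hIs2 : (∫ ω, s k₂ ω b ∂μ)
      = (1/2 : ℝ) * ((∫ ω, ∑ p : Fin n × Fin n, D p * (u ω p.1 * u ω p.2) ∂μ) - T2) := by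
    rw [integral_congr_ae (Filter.Eventually.of_forall hsb), integral_const_mul,
      integral_sub hintY (integrable_const T2), integral_const]
    simp
  have h1 : Integrable (fun ω => (1/4 : ℝ) * ((∑ p : Fin n × Fin n, C p * (u ω p.1 * u ω p.2))
      * (∑ r : Fin n × Fin n, D r * (u ω r.1 * u ω r.2)))) μ := hintXY.const_mul _
  have h2 : Integrable (fun ω => ((1/4 : ℝ) * T2)
      * (∑ p : Fin n × Fin n, C p * (u ω p.1 * u ω p.2))) μ := hintX.const_mul _
  have h3 : Integrable (fun ω => ((1/4 : ℝ) * T1)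
      * (∑ r : Fin n × Fin n, D r * (u ω r.1 * u ω r.2))) μ := hintY.const_mul _
  have hIprod : (∫ ω, s k₁ ω a * s k₂ ω b ∂μ)
      = (1/4 : ℝ) * (∫ ω, (∑ p : Fin n × Fin n, C p * (u ω p.1 * u ω p.2))
          * (∑ r : Fin n × Fin n, D r * (u ω r.1 * u ω r.2)) ∂μ)
        - ((1/4 : ℝ) * T2) * (∫ ω, ∑ p : Fin n × Fin n, C p * (u ω p.1 * u ω p.2) ∂μ)
        - ((1/4 : ℝ) * T1) * (∫ ω, ∑ r : Fin n × Fin n, D r * (u ω r.1 * u ω r.2) ∂μ)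
        + (1/4 : ℝ) * (T1 * T2) := by
    have hfun : ∀ ω, s k₁ ω a * s k₂ ω b
        = (1/4 : ℝ) * ((∑ p : Fin n × Fin n, C p * (u ω p.1 * u ω p.2))
            * (∑ r : Fin n × Fin n, D r * (u ω r.1 * u ω r.2)))
          - ((1/4 : ℝ) * T2) * (∑ p : Fin n × Fin n, C p * (u ω p.1 * u ω p.2))
          - ((1/4 : ℝ) * T1) * (∑ r : Fin n × Fin n, D r * (u ω r.1 * u ω r.2))
          + (1/4 : ℝ) * (T1 * T2) := by
      intro ω
      rw [hsa ω, hsb ω]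
      ring
    have h12 : Integrable (fun ω => (1/4 : ℝ) * ((∑ p : Fin n × Fin n, C p * (u ω p.1 * u ω p.2))
        * (∑ r : Fin n × Fin n, D r * (u ω r.1 * u ω r.2)))
      - ((1/4 : ℝ) * T2) * (∑ p : Fin n × Fin n, C p * (u ω p.1 * u ω p.2))) μ := h1.sub h2
    have h123 : Integrable (fun ω => (1/4 : ℝ) * ((∑ p : Fin n × Fin n, C p * (u ω p.1 * u ω p.2))
        * (∑ r : Fin n × Fin n, D r * (u ω r.1 * u ω r.2)))
      - ((1/4 : ℝ) * T2) * (∑ p : Fin n × Fin n, C p * (u ω p.1 * u ω p.2))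
      - ((1/4 : ℝ) * T1) * (∑ r : Fin n × Fin n, D r * (u ω r.1 * u ω r.2))) μ := h12.sub h3
    rw [integral_congr_ae (Filter.Eventually.of_forall hfun),
      integral_add h123 (integrable_const _),
      integral_sub h12 h3, integral_sub h1 h2,
      integral_const_mul, integral_const_mul, integral_const_mul, integral_const]
    simp
  -- matrix dot products
  have hBdot1 : ∀ (i : Fin (l k₁)) (j : Fin (l k₂)) (y : Fin (q k₁)) (y' : Fin (q k₂)),
      (∑ m, ((Z k₁ i)ᵀ * V⁻¹ * R) y m * ((Z k₂ j)ᵀ * V⁻¹ * R) y' m)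
        = ((Z k₁ i)ᵀ * V⁻¹ * Z k₂ j) y y' := by
    intro i j y y'
    have h : (((Z k₁ i)ᵀ * V⁻¹ * R) * (((Z k₂ j)ᵀ * V⁻¹ * R))ᵀ) y y'
        = (∑ m, ((Z k₁ i)ᵀ * V⁻¹ * R) y m * ((Z k₂ j)ᵀ * V⁻¹ * R) y' m) := by
      rw [Matrix.mul_apply]
      exact Finset.sum_congr rfl fun m _ => by rw [Matrix.transpose_apply]
    rw [← h, hAB i j]
  have hCD : (∑ p : Fin n × Fin n, C p * (D p + D (p.2, p.1)))
      = (∑ i, ∑ j, ((Z k₁ i)ᵀ * V⁻¹ * Z k₂ j) a.1 b.1 * ((Z k₁ i)ᵀ * V⁻¹ * Z k₂ j) a.2 b.2)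
      + (∑ i, ∑ j, ((Z k₁ i)ᵀ * V⁻¹ * Z k₂ j) a.2 b.1 * ((Z k₁ i)ᵀ * V⁻¹ * Z k₂ j) a.1 b.2) := by
    simp only [mul_add, Finset.sum_add_distrib]
    congr 1
    · -- ∑ p, C p * D p
      calc ∑ p : Fin n × Fin n, C p * D p
          = ∑ p : Fin n × Fin n, ∑ i, ∑ j,
              ((((Z k₁ i)ᵀ * V⁻¹ * R) a.2 p.1 * ((Z k₁ i)ᵀ * V⁻¹ * R) a.1 p.2)
              * (((Z k₂ j)ᵀ * V⁻¹ * R) b.2 p.1 * ((Z k₂ j)ᵀ * V⁻¹ * R) b.1 p.2)) := by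
            refine Finset.sum_congr rfl fun p _ => ?_
            rw [hCdef, hDdef, Finset.sum_mul_sum]
        _ = ∑ i, ∑ j, ∑ p : Fin n × Fin n,
              ((((Z k₁ i)ᵀ * V⁻¹ * R) a.2 p.1 * ((Z k₁ i)ᵀ * V⁻¹ * R) a.1 p.2)
              * (((Z k₂ j)ᵀ * V⁻¹ * R) b.2 p.1 * ((Z k₂ j)ᵀ * V⁻¹ * R) b.1 p.2)) := by
            rw [Finset.sum_comm]
            exact Finset.sum_congr rfl fun i _ => Finset.sum_comm
        _ = ∑ i, ∑ j,
              (∑ m, ((Z k₁ i)ᵀ * V⁻¹ * R) a.2 m * ((Z k₂ j)ᵀ * V⁻¹ * R) b.2 m)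
              * (∑ t, ((Z k₁ i)ᵀ * V⁻¹ * R) a.1 t * ((Z k₂ j)ᵀ * V⁻¹ * R) b.1 t) := by
            refine Finset.sum_congr rfl fun i _ => Finset.sum_congr rfl fun j _ => ?_
            exact sum_pair_factor _ _ _ _
        _ = ∑ i, ∑ j, ((Z k₁ i)ᵀ * V⁻¹ * Z k₂ j) a.1 b.1 * ((Z k₁ i)ᵀ * V⁻¹ * Z k₂ j) a.2 b.2 := by
            refine Finset.sum_congr rfl fun i _ => Finset.sum_congr rfl fun j _ => ?_
            rw [hBdot1, hBdot1]
            ring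
    · -- ∑ p, C p * D (p.2, p.1)
      calc ∑ p : Fin n × Fin n, C p * D (p.2, p.1)
          = ∑ p : Fin n × Fin n, ∑ i, ∑ j,
              ((((Z k₁ i)ᵀ * V⁻¹ * R) a.2 p.1 * ((Z k₁ i)ᵀ * V⁻¹ * R) a.1 p.2)
              * (((Z k₂ j)ᵀ * V⁻¹ * R) b.2 p.2 * ((Z k₂ j)ᵀ * V⁻¹ * R) b.1 p.1)) := by
            refine Finset.sum_congr rfl fun p _ => ?_
            rw [hCdef, hDdef, Finset.sum_mul_sum]
        _ = ∑ i, ∑ j, ∑ p : Fin n × Fin n,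
              ((((Z k₁ i)ᵀ * V⁻¹ * R) a.2 p.1 * ((Z k₁ i)ᵀ * V⁻¹ * R) a.1 p.2)
              * (((Z k₂ j)ᵀ * V⁻¹ * R) b.2 p.2 * ((Z k₂ j)ᵀ * V⁻¹ * R) b.1 p.1)) := by
            rw [Finset.sum_comm]
            exact Finset.sum_congr rfl fun i _ => Finset.sum_comm
        _ = ∑ i, ∑ j,
              (∑ m, ((Z k₁ i)ᵀ * V⁻¹ * R) a.2 m * ((Z k₂ j)ᵀ * V⁻¹ * R) b.1 m)
              * (∑ t, ((Z k₁ i)ᵀ * V⁻¹ * R) a.1 t * ((Z k₂ j)ᵀ * V⁻¹ * R) b.2 t) := by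
            refine Finset.sum_congr rfl fun i _ => Finset.sum_congr rfl fun j _ => ?_
            rw [← sum_pair_factor (((Z k₁ i)ᵀ * V⁻¹ * R) a.2) (((Z k₁ i)ᵀ * V⁻¹ * R) a.1)
              (((Z k₂ j)ᵀ * V⁻¹ * R) b.1) (((Z k₂ j)ᵀ * V⁻¹ * R) b.2)]
            exact Finset.sum_congr rfl fun p _ => by ring
        _ = ∑ i, ∑ j, ((Z k₁ i)ᵀ * V⁻¹ * Z k₂ j) a.2 b.1 * ((Z k₁ i)ᵀ * V⁻¹ * Z k₂ j) a.1 b.2 := by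
            refine Finset.sum_congr rfl fun i _ => Finset.sum_congr rfl fun j _ => ?_
            rw [hBdot1, hBdot1]
  -- RHS evaluation
  have hRHS : ((1 / 2 : ℝ) • (Nmat (q k₁) *
        ∑ i, ∑ j, kroneckerMap (· * ·) ((Z k₁ i)ᵀ * V⁻¹ * Z k₂ j)
          ((Z k₁ i)ᵀ * V⁻¹ * Z k₂ j))) a b
      = (1/4 : ℝ) *
        ((∑ i, ∑ j, ((Z k₁ i)ᵀ * V⁻¹ * Z k₂ j) a.1 b.1 * ((Z k₁ i)ᵀ * V⁻¹ * Z k₂ j) a.2 b.2)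
        + (∑ i, ∑ j, ((Z k₁ i)ᵀ * V⁻¹ * Z k₂ j) a.2 b.1 * ((Z k₁ i)ᵀ * V⁻¹ * Z k₂ j) a.1 b.2)) := by
    have hSapp : ∀ (c : Fin (q k₁) × Fin (q k₁)),
        (∑ i, ∑ j, kroneckerMap (· * ·) ((Z k₁ i)ᵀ * V⁻¹ * Z k₂ j)
          ((Z k₁ i)ᵀ * V⁻¹ * Z k₂ j)) c b
        = ∑ i, ∑ j, ((Z k₁ i)ᵀ * V⁻¹ * Z k₂ j) c.1 b.1 * ((Z k₁ i)ᵀ * V⁻¹ * Z k₂ j) c.2 b.2 := by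
      intro c
      rw [Matrix.sum_apply]
      refine Finset.sum_congr rfl fun i _ => ?_
      rw [Matrix.sum_apply]
      refine Finset.sum_congr rfl fun j _ => ?_
      rfl
    have hNapp : ∀ c : Fin (q k₁) × Fin (q k₁), Nmat (q k₁) a c
        = (1/2 : ℝ) * ((if a = c then (1:ℝ) else 0) + (if c = (a.2, a.1) then 1 else 0)) := by
      intro c
      have hiff : (a.1 = c.2 ∧ a.2 = c.1) ↔ (c = (a.2, a.1)) := by
        constructor
        · rintro ⟨h1, h2⟩
          exact Prod.ext h2.symm h1.symm
        · rintro rfl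
          exact ⟨rfl, rfl⟩
      rw [Nmat, Matrix.smul_apply, Matrix.add_apply, Matrix.one_apply, smul_eq_mul, commMat,
        if_congr hiff rfl rfl]
    rw [Matrix.smul_apply, smul_eq_mul, Matrix.mul_apply]
    have hterm : ∀ c : Fin (q k₁) × Fin (q k₁),
        Nmat (q k₁) a c * (∑ i, ∑ j, kroneckerMap (· * ·) ((Z k₁ i)ᵀ * V⁻¹ * Z k₂ j)
          ((Z k₁ i)ᵀ * V⁻¹ * Z k₂ j)) c b
        = (if a = c then (1/2 : ℝ) * (∑ i, ∑ j, ((Z k₁ i)ᵀ * V⁻¹ * Z k₂ j) c.1 b.1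
              * ((Z k₁ i)ᵀ * V⁻¹ * Z k₂ j) c.2 b.2) else 0)
          + (if c = (a.2, a.1) then (1/2 : ℝ) * (∑ i, ∑ j, ((Z k₁ i)ᵀ * V⁻¹ * Z k₂ j) c.1 b.1
              * ((Z k₁ i)ᵀ * V⁻¹ * Z k₂ j) c.2 b.2) else 0) := by
      intro c
      rw [hNapp c, hSapp c]
      split_ifs <;> ring
    rw [Finset.sum_congr rfl fun c _ => hterm c, Finset.sum_add_distrib,
      Finset.sum_ite_eq, Finset.sum_ite_eq']
    simp only [Finset.mem_univ, if_pos]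
    ring
  rw [hIprod, hIs1, hIs2, hRHS]
  linear_combination (1/4 : ℝ) * hcov + (1/4 : ℝ) * hCD
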